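/- Suppose μ = (μ_1, μ_2, μ_3) = π_0 v_0 + π_k v_k + π_i v_i + π_{i+1} v_{i+1} with π_0 + π_k + π_i + π_{i+1} = 1, where v_j = (j/n, (j/n)², (j/n)³) and 0, k, i, i+1 are distinct integers in {0,...,n}. Then π_i = n[n²μ_3 − (k+i+1)nμ_2 + k(i+1)μ_1] / [i(k−i)] and π_{i+1} = −n[n²μ_3 − (k+i)nμ_2 + k i μ_1] / [(i+1)(k−i−1)]. -/

import Mathlib

/-- The coefficients of `v_i` and `v_{i+1}` in an affine combination
`μ = π₀ v₀ + π_k v_k + π_i v_i + π_{i+1} v_{i+1}` on the normalized cubic moment curve. -/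
theorem stmt13 (n k i : ℕ) (hn : 0 < n) (hk0 : 0 < k) (hkn : k ≤ n)
    (hi0 : 0 < i) (hin : i + 1 ≤ n) (hik : i ≠ k) (hi1k : i + 1 ≠ k)
    (π0 πk πi πi1 : ℝ) (hsum : π0 + πk + πi + πi1 = 1)
    (μ1 μ2 μ3 : ℝ)
    (hμ : ∀ m ∈ ({1, 2, 3} : Finset ℕ),
      (if m = 1 then μ1 else if m = 2 then μ2 else μ3) =
        π0 * ((0 : ℝ) / n) ^ m + πk * ((k : ℝ) / n) ^ m +
          πi * ((i : ℝ) / n) ^ m + πi1 * (((i : ℝ) + 1) / n) ^ m) :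
    πi = (n : ℝ) * ((n : ℝ) ^ 2 * μ3 - ((k : ℝ) + (i : ℝ) + 1) * n * μ2 + (k : ℝ) * ((i : ℝ) + 1) * μ1) /
        ((i : ℝ) * ((k : ℝ) - (i : ℝ))) ∧
      πi1 = -((n : ℝ) * ((n : ℝ) ^ 2 * μ3 - ((k : ℝ) + (i : ℝ)) * n * μ2 + (k : ℝ) * (i : ℝ) * μ1)) /
        (((i : ℝ) + 1) * ((k : ℝ) - (i : ℝ) - 1)) := by
  have hn' : (n : ℝ) ≠ 0 := Nat.cast_ne_zero.mpr hn.ne'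
  have hi' : (i : ℝ) ≠ 0 := Nat.cast_ne_zero.mpr hi0.ne'
  have hi1' : (i : ℝ) + 1 ≠ 0 := by positivity
  have hik' : (k : ℝ) - (i : ℝ) ≠ 0 := by
    have : (i : ℝ) ≠ (k : ℝ) := fun h => hik (Nat.cast_injective h)
    intro h; exact this (by linarith)
  have hi1k' : (k : ℝ) - (i : ℝ) - 1 ≠ 0 := by
    have : ((i : ℝ) + 1) ≠ (k : ℝ) := fun h => hi1k (by exact_mod_cast h)
    intro h; exact this (by linarith)
  have h1 := hμ 1 (by simp)
  have h2 := hμ 2 (by simp)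
  have h3 := hμ 3 (by simp)
  simp +decide only [if_true, if_pos, if_neg, reduceIte] at h1 h2 h3
  have e1 : μ1 * n = πk * k + πi * i + πi1 * (i + 1) := by
    field_simp at h1; linarith
  have e2 : μ2 * n ^ 2 = πk * k ^ 2 + πi * i ^ 2 + πi1 * (i + 1) ^ 2 := by
    field_simp at h2; linarith
  have e3 : μ3 * n ^ 3 = πk * k ^ 3 + πi * i ^ 3 + πi1 * (i + 1) ^ 3 := by
    field_simp at h3; linarith
  constructor
  · rw [eq_div_iff (mul_ne_zero hi' hik')]
    linear_combination (-((k : ℝ) * (i + 1))) * e1 + ((k : ℝ) + i + 1) * e2 - e3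
  · rw [eq_div_iff (mul_ne_zero hi1' hi1k')]
    linear_combination ((k : ℝ) * i) * e1 - ((k : ℝ) + i) * e2 + e3
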